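/- Let R = K⟨x,y⟩/(xy−1) and S₁ = Rf₁ the left ideal generated by f₁ = 1 − yx. Then S₁ is a simple left R-module. -/

import Mathlib

noncomputable section

/-- The defining relation of the Toeplitz/Jacobson algebra: `x * y = 1`. -/
inductive ToeplitzRel (K : Type*) [Field K] :
    FreeAlgebra K (Fin 2) → FreeAlgebra K (Fin 2) → Prop
  | rel : ToeplitzRel K (FreeAlgebra.ι K 0 * FreeAlgebra.ι K 1) 1

/-- The Toeplitz/Jacobson algebra `R = K⟨x,y⟩/(xy-1)`. -/
abbrev Toeplitz (K : Type*) [Field K] := RingQuot (ToeplitzRel K)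

variable (K : Type*) [Field K]

/-- The image of the generator `x` in `R`. -/
def tx : Toeplitz K := RingQuot.mkAlgHom K (ToeplitzRel K) (FreeAlgebra.ι K 0)

/-- The image of the generator `y` in `R`. -/
def ty : Toeplitz K := RingQuot.mkAlgHom K (ToeplitzRel K) (FreeAlgebra.ι K 1)

/-- `f n = y^(n-1) x^(n-1) - y^n x^n`. -/
def tf (n : ℕ) : Toeplitz K := ty K ^ (n-1) * tx K ^ (n-1) - ty K ^ n * tx K ^ n

open Finsupp in
def TX : Module.End K (ℕ →₀ K) := Finsupp.lcomapDomain (· + 1) (add_left_injective 1)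
def TY : Module.End K (ℕ →₀ K) := Finsupp.lmapDomain K K (· + 1)

theorem TX_apply (v : ℕ →₀ K) (n : ℕ) : TX K v n = v (n + 1) := rfl

theorem TX_single_zero (c : K) : TX K (Finsupp.single 0 c) = 0 := by
  ext n; rw [TX_apply]; simp [Finsupp.single_apply]

theorem TX_single_succ (m : ℕ) (c : K) :
    TX K (Finsupp.single (m + 1) c) = Finsupp.single m c := by
  ext n; rw [TX_apply]; simp [Finsupp.single_apply]

theorem TY_single (m : ℕ) (c : K) :
    TY K (Finsupp.single m c) = Finsupp.single (m + 1) c := by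
  simp [TY, Finsupp.mapDomain_single]

theorem TXY : TX K * TY K = 1 := by
  apply Finsupp.lhom_ext
  intro a b
  show TX K (TY K (Finsupp.single a b)) = Finsupp.single a b
  rw [TY_single, TX_single_succ]

def trep : Toeplitz K →ₐ[K] Module.End K (ℕ →₀ K) :=
  RingQuot.liftAlgHom K ⟨FreeAlgebra.lift K ![TX K, TY K], by
    rintro a b ⟨⟩
    simp only [map_mul, map_one, FreeAlgebra.lift_ι_apply]
    show TX K * TY K = 1
    exact TXY K⟩

theorem trep_tx : trep K (tx K) = TX K := by
  rw [tx, trep, RingQuot.liftAlgHom_mkAlgHom_apply]; simp [FreeAlgebra.lift_ι_apply]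

theorem trep_ty : trep K (ty K) = TY K := by
  rw [ty, trep, RingQuot.liftAlgHom_mkAlgHom_apply]; simp [FreeAlgebra.lift_ι_apply]

theorem txy : tx K * ty K = 1 := by
  rw [tx, ty, ← map_mul, RingQuot.mkAlgHom_rel K ToeplitzRel.rel, map_one]

/-- the idempotent `e = 1 - yx` -/
def te : Toeplitz K := 1 - ty K * tx K

theorem tx_e : tx K * te K = 0 := by
  have h := txy K
  simp only [te, mul_sub, mul_one, ← mul_assoc, h, one_mul, sub_self]

theorem te_idem : te K * te K = te K := by
  nth_rewrite 1 [te]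
  rw [sub_mul, one_mul, mul_assoc, tx_e, mul_zero, sub_zero]

theorem tx_pow_y (m : ℕ) : tx K * ty K ^ (m + 1) = ty K ^ m := by
  rw [pow_succ', ← mul_assoc, txy, one_mul]

/-- The Toeplitz-module structure on `ℕ →₀ K` via the representation. -/
instance tmod : Module (Toeplitz K) (ℕ →₀ K) :=
  Module.compHom _ (trep K : Toeplitz K →+* Module.End K (ℕ →₀ K))

theorem tsmul (r : Toeplitz K) (v : ℕ →₀ K) : r • v = trep K r v := rfl

/-- the "inverse" map sending `δₘ ↦ yᵐ e` -/
def tpsi : (ℕ →₀ K) →ₗ[K] Toeplitz K :=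
  Finsupp.linearCombination K (fun m => ty K ^ m * te K)

theorem tpsi_single (m : ℕ) (c : K) :
    tpsi K (Finsupp.single m c) = c • (ty K ^ m * te K) := by
  simp [tpsi, Finsupp.linearCombination_single]

/-- key equivariance: `ψ (ρ r v) = r * ψ v` -/
theorem tkey (r : Toeplitz K) (v : ℕ →₀ K) : tpsi K (trep K r v) = r * tpsi K v := by
  obtain ⟨a, rfl⟩ := RingQuot.mkAlgHom_surjective K (ToeplitzRel K) r
  induction a using FreeAlgebra.induction generalizing v with
  | grade0 c =>
      rw [AlgHom.commutes, AlgHom.commutes, Module.algebraMap_end_apply, map_smul,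
        Algebra.smul_def]
  | grade1 i =>
      have h : ∀ (L : Module.End K (ℕ →₀ K)) (t : Toeplitz K),
          (∀ m c, tpsi K (L (Finsupp.single m c)) = t * tpsi K (Finsupp.single m c)) →
          tpsi K (L v) = t * tpsi K v := by
        intro L t hL
        have : (tpsi K).comp L = (LinearMap.mulLeft K t).comp (tpsi K) := by
          apply Finsupp.lhom_ext
          intro m c
          simpa using hL m c
        simpa using LinearMap.congr_fun this v
      fin_cases i
      · -- x
        show tpsi K (trep K (tx K) v) = tx K * tpsi K v
        rw [trep_tx]
        refine h (TX K) (tx K) ?_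
        intro m c
        cases m with
        | zero =>
            rw [TX_single_zero, map_zero, tpsi_single, pow_zero, one_mul, mul_smul_comm,
              tx_e, smul_zero]
        | succ m =>
            rw [TX_single_succ, tpsi_single, tpsi_single, mul_smul_comm, ← mul_assoc,
              tx_pow_y]
      · -- y
        show tpsi K (trep K (ty K) v) = ty K * tpsi K v
        rw [trep_ty]
        refine h (TY K) (ty K) ?_
        intro m c
        rw [TY_single, tpsi_single, tpsi_single, mul_smul_comm, ← mul_assoc, ← pow_succ']
  | add a b ha hb => rw [map_add, map_add, LinearMap.add_apply, map_add, add_mul, ha, hb]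
  | mul a b ha hb =>
      rw [map_mul, map_mul, Module.End.mul_apply, ha, hb, mul_assoc]

theorem trep_te_apply (u : ℕ →₀ K) : trep K (te K) u = Finsupp.single 0 (u 0) := by
  rw [te, map_sub, map_one, map_mul, trep_tx, trep_ty]
  ext n
  rw [LinearMap.sub_apply, Module.End.one_apply, Module.End.mul_apply, Finsupp.sub_apply]
  cases n with
  | zero =>
      rw [show TY K (TX K u) = Finsupp.mapDomain (· + 1) (TX K u) from rfl,
        Finsupp.mapDomain_notin_range _ _ (by rintro ⟨m, hm⟩; exact Nat.succ_ne_zero m hm)]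
      simp
  | succ n =>
      rw [show TY K (TX K u) = Finsupp.mapDomain (· + 1) (TX K u) from rfl,
        Finsupp.mapDomain_apply (add_left_injective 1), TX_apply, Finsupp.single_apply]
      simp

theorem trep_ypow (m : ℕ) :
    trep K (ty K ^ m) (Finsupp.single 0 1) = Finsupp.single m 1 := by
  induction m with
  | zero => simp
  | succ m ih => rw [pow_succ', map_mul, Module.End.mul_apply, ih, trep_ty, TY_single]

theorem TX_pow_apply (k : ℕ) (v : ℕ →₀ K) (n : ℕ) : (TX K ^ k) v n = v (n + k) := by
  induction k generalizing v n with
  | zero => rfl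
  | succ k ih =>
      rw [pow_succ, Module.End.mul_apply, ih, TX_apply, show n + k + 1 = n + (k+1) from rfl]

theorem ksmul_eq (c : K) (u : ℕ →₀ K) : (algebraMap K (Toeplitz K) c) • u = c • u := by
  rw [tsmul, AlgHom.commutes, Module.algebraMap_end_apply]

theorem M_simple : IsSimpleModule (Toeplitz K) (ℕ →₀ K) := by
  haveI : Nontrivial (Submodule (Toeplitz K) (ℕ →₀ K)) := by
    refine nontrivial_of_ne ⊥ ⊤ fun h => ?_
    have : (Finsupp.single 0 1 : ℕ →₀ K) ∈ (⊥ : Submodule (Toeplitz K) (ℕ →₀ K)) := by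
      rw [h]; trivial
    simpa using Finsupp.single_eq_zero.mp (Submodule.mem_bot _ |>.mp this)
  refine (isSimpleModule_iff _ _).mpr ⟨fun N => ?_⟩
  by_cases hN : N = ⊥
  · exact Or.inl hN
  right
  obtain ⟨v, hvN, hv⟩ := Submodule.exists_mem_ne_zero_of_ne_bot hN
  obtain ⟨k, hk⟩ : ∃ k, v k ≠ 0 := by
    by_contra h
    push_neg at h
    exact hv (Finsupp.ext h)
  -- shift down and project to get δ₀
  have hw : (te K * tx K ^ k) • v ∈ N := N.smul_mem _ hvN
  have hw' : (te K * tx K ^ k) • v = Finsupp.single 0 (v k) := by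
    rw [tsmul, map_mul, Module.End.mul_apply, map_pow, trep_tx, trep_te_apply, TX_pow_apply,
      zero_add]
  rw [hw'] at hw
  have h1 : (Finsupp.single 0 1 : ℕ →₀ K) ∈ N := by
    have := N.smul_mem (algebraMap K (Toeplitz K) (v k)⁻¹) hw
    rwa [ksmul_eq, Finsupp.smul_single, smul_eq_mul, inv_mul_cancel₀ hk] at this
  have hsingle : ∀ (m : ℕ) (c : K), (Finsupp.single m c : ℕ →₀ K) ∈ N := by
    intro m c
    have := N.smul_mem (algebraMap K (Toeplitz K) c * ty K ^ m) h1
    rwa [mul_smul, show (ty K ^ m) • (Finsupp.single 0 1 : ℕ →₀ K) =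
      Finsupp.single m 1 from trep_ypow K m, ksmul_eq, Finsupp.smul_single, smul_eq_mul,
      mul_one] at this
  rw [eq_top_iff]
  intro u hu
  clear hu
  induction u using Finsupp.induction with
  | zero => exact N.zero_mem
  | single_add a b f _ _ ihf => exact N.add_mem (hsingle a b) ihf

def tphi0 : Toeplitz K →ₗ[Toeplitz K] (ℕ →₀ K) where
  toFun r := trep K r (Finsupp.single 0 1)
  map_add' a b := by
    show trep K (a + b) _ = _
    rw [map_add, LinearMap.add_apply]
  map_smul' a r := by
    show trep K (a * r) (Finsupp.single 0 1)
      = (RingHom.id (Toeplitz K)) a • trep K r (Finsupp.single 0 1)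
    rw [map_mul, Module.End.mul_apply, RingHom.id_apply]
    rfl

theorem tpsi_delta0 : tpsi K (Finsupp.single 0 1) = te K := by
  rw [tpsi_single]; simp

theorem toeplitz_S1_simple' :
    IsSimpleModule (Toeplitz K) (Submodule.span (Toeplitz K) {te K}) := by
  haveI := M_simple K
  set S : Submodule (Toeplitz K) (Toeplitz K) := Submodule.span (Toeplitz K) {te K}
  let Φ : S →ₗ[Toeplitz K] (ℕ →₀ K) := (tphi0 K).domRestrict S
  have hinj : Function.Injective Φ := by
    rw [injective_iff_map_eq_zero]
    rintro ⟨s, hs⟩ h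
    obtain ⟨r, rfl⟩ := Submodule.mem_span_singleton.mp hs
    have hΦ : trep K (r • te K) (Finsupp.single 0 1) = 0 := h
    have : r • te K = tpsi K (trep K (r • te K) (Finsupp.single 0 1)) := by
      rw [tkey, tpsi_delta0, smul_eq_mul, mul_assoc, te_idem]
    rw [hΦ, map_zero] at this
    exact Subtype.ext this
  have hsurj : Function.Surjective Φ := by
    have key : ∀ v : ℕ →₀ K, v ∈ LinearMap.range Φ := by
      intro v
      induction v using Finsupp.induction with
      | zero => exact zero_mem _
      | single_add a b f _ _ ihf =>
          refine add_mem ?_ ihf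
          have hmem : (algebraMap K (Toeplitz K) b * ty K ^ a) • te K ∈ S :=
            Submodule.mem_span_singleton.mpr ⟨_, rfl⟩
          refine ⟨⟨_, hmem⟩, ?_⟩
          show trep K ((algebraMap K (Toeplitz K) b * ty K ^ a) • te K)
            (Finsupp.single 0 1) = Finsupp.single a b
          rw [smul_eq_mul, mul_assoc, map_mul, Module.End.mul_apply,
            show trep K (ty K ^ a * te K) (Finsupp.single 0 1)
              = Finsupp.single a 1 by
                rw [map_mul, Module.End.mul_apply, trep_te_apply]
                simpa using trep_ypow K a,
            AlgHom.commutes, Module.algebraMap_end_apply, Finsupp.smul_single,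
            smul_eq_mul, mul_one]
    exact key
  exact IsSimpleModule.congr (LinearEquiv.ofBijective Φ ⟨hinj, hsurj⟩)

/-- `S₁ = R(1 - yx)` is a simple left `R`-module. -/
theorem toeplitz_S1_simple :
    IsSimpleModule (Toeplitz K) (Submodule.span (Toeplitz K) {1 - ty K * tx K}) :=
  toeplitz_S1_simple' K
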